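/- If X, Y, Z are positive integers with gcd(X, Z) = 1 satisfying X⁴ + Y⁴ = 2Z², then X = Y = Z = 1. -/

import Mathlib

private lemma natAbs_lt_of_sq_lt {m a : ℤ} (h : m ^ 2 < a ^ 2) : m.natAbs < a.natAbs := by
  by_contra hc
  push_neg at hc
  have h1 : a ^ 2 ≤ m ^ 2 := by
    have := Int.natAbs_pow m 2
    have := Int.natAbs_pow a 2
    have h2 : (a ^ 2).natAbs ≤ (m ^ 2).natAbs := by
      rw [Int.natAbs_pow, Int.natAbs_pow]
      exact Nat.pow_le_pow_left hc 2
    have h3 : ((a ^ 2).natAbs : ℤ) ≤ ((m ^ 2).natAbs : ℤ) := Int.ofNat_le.mpr h2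
    rwa [Int.natAbs_of_nonneg (sq_nonneg a), Int.natAbs_of_nonneg (sq_nonneg m)] at h3
  omega

/-- Core of the even case of the descent. -/
private lemma key2 (a o e' b' : ℤ) (ha : 0 < a) (ho2 : 0 < o) (he2 : 0 < e')
    (ho : o % 2 = 1) (hcop : Int.gcd o (2 * e') = 1)
    (h : a ^ 2 = o ^ 2 + (2 * e') ^ 2) (hb' : b' ≠ 0) (hprod : o * (2 * e') = 2 * b' ^ 2) :
    ∃ u v i : ℤ, Int.gcd u v = 1 ∧ v ≠ 0 ∧ i ≠ 0 ∧ u ^ 4 = v ^ 4 + i ^ 2 ∧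
      u.natAbs < a.natAbs := by
  have hoe' : o * e' = b' ^ 2 := by
    have h2 : 2 * (o * e') = 2 * b' ^ 2 := by linear_combination hprod
    exact mul_left_cancel₀ two_ne_zero h2
  have hcop' : Int.gcd o e' = 1 := by
    have := Int.isCoprime_iff_gcd_eq_one.mpr hcop
    exact Int.isCoprime_iff_gcd_eq_one.mp this.of_mul_right_right
  obtain ⟨i, hi⟩ := Int.sq_of_gcd_eq_one hcop' hoe'
  have hi : o = i ^ 2 := by
    rcases hi with hi | hi
    · exact hi
    · exfalso; nlinarith [sq_nonneg i]
  obtain ⟨j, hj⟩ := Int.sq_of_gcd_eq_one (by rwa [Int.gcd_comm] at hcop')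
    (by rwa [mul_comm] at hoe')
  have hj : e' = j ^ 2 := by
    rcases hj with hj | hj
    · exact hj
    · exfalso; nlinarith [sq_nonneg j]
  have ht : PythagoreanTriple o (2 * e') a := by
    delta PythagoreanTriple; linear_combination -h
  obtain ⟨p, q, hop, hep, hap, hpq, hpar, hp0⟩ := ht.coprime_classification' hcop ho ha
  have hpq' : p * q = e' := by linarith [hep]
  have hq0 : 0 < p * q := by rw [hpq']; exact he2
  have hp0' : 0 < p := by
    rcases lt_or_eq_of_le hp0 with h1 | h1
    · exact h1
    · exfalso; rw [← h1] at hq0; simp at hq0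
  have hq0' : 0 < q := by nlinarith
  obtain ⟨u, hu⟩ := Int.sq_of_gcd_eq_one hpq (by rw [hpq']; exact hj)
  have hu : p = u ^ 2 := by
    rcases hu with hu | hu
    · exact hu
    · exfalso; nlinarith [sq_nonneg u]
  obtain ⟨v, hv⟩ := Int.sq_of_gcd_eq_one (by rwa [Int.gcd_comm] at hpq)
    (by rw [mul_comm, hpq']; exact hj)
  have hv : q = v ^ 2 := by
    rcases hv with hv | hv
    · exact hv
    · exfalso; nlinarith [sq_nonneg v]
  refine ⟨u, v, i, ?_, ?_, ?_, ?_, ?_⟩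
  · rw [hu, hv] at hpq
    have h1 := Int.isCoprime_iff_gcd_eq_one.mpr hpq
    rw [sq, sq] at h1
    exact Int.isCoprime_iff_gcd_eq_one.mp h1.of_mul_left_left.of_mul_right_left
  · intro h0; rw [h0] at hv; simp at hv; omega
  · intro h0; rw [h0] at hi; simp at hi; omega
  · have h2 : i ^ 2 = (u ^ 2) ^ 2 - (v ^ 2) ^ 2 := by rw [← hu, ← hv, ← hi, hop]
    linear_combination -h2
  · have h3 : (u.natAbs : ℤ) < (a.natAbs : ℤ) := by
      calc (u.natAbs : ℤ) ≤ u ^ 2 := Int.natAbs_le_self_sq u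
        _ = p := hu.symm
        _ < p ^ 2 + q ^ 2 := by
            have h4 : p ≤ p ^ 2 := Int.le_self_sq p
            have h5 : 0 < q ^ 2 := by positivity
            linarith
        _ = a := hap.symm
        _ = (a.natAbs : ℤ) := by rw [Int.natAbs_of_nonneg (le_of_lt ha)]
    exact_mod_cast h3

/-- There are no nontrivial solutions to `a ^ 4 = b ^ 4 + c ^ 2` with `a`, `b` coprime. -/
private lemma no44 : ∀ (n : ℕ) (a b c : ℤ), a.natAbs = n → Int.gcd a b = 1 → b ≠ 0 → c ≠ 0 →
    a ^ 4 ≠ b ^ 4 + c ^ 2 := by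
  intro n
  induction n using Nat.strong_induction_on with
  | _ n IH =>
    rintro a b c rfl hgcd hb hc heq
    have ha : a ≠ 0 := by
      intro h0
      rw [h0] at heq
      have h1 : 0 < b ^ 4 := by positivity
      have h2 : 0 < c ^ 2 := by positivity
      simp only [ne_eq, OfNat.ofNat_ne_zero, not_false_eq_true, zero_pow] at heq
      linarith
    have hapos : 0 < a ^ 2 := by positivity
    -- b and c are coprime
    have hab : IsCoprime a b := Int.isCoprime_iff_gcd_eq_one.mpr hgcd
    have hbc : IsCoprime b c := by
      have h1 : IsCoprime b (a ^ 4 + b * (-(b ^ 3))) :=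
        (hab.symm.pow_right).add_mul_left_right _
      have h2 : c ^ 2 = a ^ 4 + b * (-(b ^ 3)) := by linear_combination -heq
      rw [← h2, sq] at h1
      exact h1.of_mul_right_left
    rcases Int.even_or_odd b with hbe | hbo
    · -- b even: c is odd
      obtain ⟨b', rfl⟩ := hbe
      have hb' : b' ≠ 0 := by intro h0; rw [h0] at hb; simp at hb
      have hco : c % 2 = 1 := by
        rcases Int.emod_two_eq_zero_or_one c with h1 | h1
        · exfalso
          have h2c : (2 : ℤ) ∣ c := Int.dvd_of_emod_eq_zero h1
          have h2b : (2 : ℤ) ∣ b' + b' := ⟨b', by ring⟩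
          have h2a : (2 : ℤ) ∣ a := by
            have h3 : (2 : ℤ) ∣ a ^ 4 := by
              rw [heq]
              exact dvd_add (dvd_pow h2b (by norm_num)) (dvd_pow h2c (by norm_num))
            exact Int.Prime.dvd_pow' Nat.prime_two h3
          have h4 : (2 : ℤ) ∣ (Int.gcd a (b' + b') : ℤ) := Int.dvd_coe_gcd h2a h2b
          rw [hgcd] at h4
          norm_num at h4
        · exact h1
      have ht : PythagoreanTriple c ((b' + b') ^ 2) (a ^ 2) := by
        delta PythagoreanTriple
        linear_combination -heq
      have hcop : Int.gcd c ((b' + b') ^ 2) = 1 :=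
        Int.isCoprime_iff_gcd_eq_one.mp (hbc.pow_left).symm
      obtain ⟨m, nn, hcm, hbm, ham, hmn, hpar, hm0⟩ := ht.coprime_classification' hcop hco hapos
      have hsq : 0 < (b' + b') ^ 2 := by positivity
      have hmn_pos : 0 < m * nn := by nlinarith [hbm, hsq]
      have hm0' : 0 < m := by
        rcases lt_or_eq_of_le hm0 with h1 | h1
        · exact h1
        · exfalso; rw [← h1] at hmn_pos; simp at hmn_pos
      have hn0' : 0 < nn := by nlinarith
      have hprod : m * nn = 2 * b' ^ 2 := by nlinarith [hbm]
      -- pass to key2 with the odd one of (m, nn) first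
      have habs : (0 : ℤ) < (a.natAbs : ℤ) := by
        simpa [Int.natAbs_pos] using ha
      have habs2 : ((a.natAbs : ℤ)) ^ 2 = a ^ 2 := by
        rw [← Int.abs_eq_natAbs, sq_abs]
      rcases hpar with ⟨hme, hno⟩ | ⟨hmo, hne⟩
      · -- m even, nn odd: o = nn, e = m
        obtain ⟨m', rfl⟩ := Int.dvd_of_emod_eq_zero hme
        obtain ⟨u, v, i, h1, h2, h3, h4, h5⟩ :=
          key2 (a.natAbs : ℤ) nn m' b' habs hn0' (by linarith) hno
            (by rwa [Int.gcd_comm] at hmn)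
            (by rw [habs2]; linear_combination ham)
            hb' (by linear_combination hprod)
        rw [Int.natAbs_natCast] at h5
        exact IH u.natAbs h5 u v i rfl h1 h2 h3 h4
      · -- m odd, nn even: o = m, e = nn
        obtain ⟨n', rfl⟩ := Int.dvd_of_emod_eq_zero hne
        obtain ⟨u, v, i, h1, h2, h3, h4, h5⟩ :=
          key2 (a.natAbs : ℤ) m n' b' habs hm0' (by linarith) hmo hmn
            (by rw [habs2]; linear_combination ham)
            hb' (by linear_combination hprod)
        rw [Int.natAbs_natCast] at h5
        exact IH u.natAbs h5 u v i rfl h1 h2 h3 h4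
    · -- b odd
      have hb2o : b ^ 2 % 2 = 1 := Int.odd_iff.mp (hbo.pow)
      have ht : PythagoreanTriple (b ^ 2) c (a ^ 2) := by
        delta PythagoreanTriple
        linear_combination -heq
      have hcop : Int.gcd (b ^ 2) c = 1 :=
        Int.isCoprime_iff_gcd_eq_one.mp (hbc.pow_left)
      obtain ⟨m, nn, hbm, hcm, ham, hmn, hpar, hm0⟩ := ht.coprime_classification' hcop hb2o hapos
      have hn0 : nn ≠ 0 := by
        intro h0; rw [h0] at hcm; simp at hcm; exact hc hcm
      have heq' : m ^ 4 = nn ^ 4 + (a * b) ^ 2 := by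
        linear_combination (-(m ^ 2 - nn ^ 2)) * ham - a ^ 2 * hbm
      have hlt : m.natAbs < a.natAbs := by
        apply natAbs_lt_of_sq_lt
        have : 0 < nn ^ 2 := by positivity
        linarith [ham]
      exact IH m.natAbs hlt m nn (a * b) rfl hmn hn0 (mul_ne_zero ha hb) heq'

theorem stmt_8 (X Y Z : ℕ) (hX : 0 < X) (hY : 0 < Y) (hZ : 0 < Z)
    (hgcd : Nat.gcd X Z = 1) (h : X ^ 4 + Y ^ 4 = 2 * Z ^ 2) :
    X = 1 ∧ Y = 1 ∧ Z = 1 := by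
  -- first show X = Y
  have hXY : X = Y := by
    by_contra hne
    -- coprimality of Z with X * Y
    have hZX : Nat.Coprime Z X := (Nat.coprime_comm.mp hgcd)
    have hZY : Nat.Coprime Z Y := by
      by_contra hcon
      obtain ⟨p, hp, hpZ, hpY⟩ := Nat.Prime.not_coprime_iff_dvd.mp hcon
      have hpX4 : p ∣ X ^ 4 := by
        have hXeq : X ^ 4 = 2 * Z ^ 2 - Y ^ 4 := by omega
        rw [hXeq]
        exact Nat.dvd_sub (Dvd.dvd.mul_left (dvd_pow hpZ (by norm_num)) 2)
          (dvd_pow hpY (by norm_num))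
      have hpX : p ∣ X := hp.dvd_of_dvd_pow hpX4
      have : p ∣ Nat.gcd X Z := Nat.dvd_gcd hpX hpZ
      rw [hgcd] at this
      exact hp.one_lt.ne' (Nat.dvd_one.mp this)
    have hZXY : Nat.Coprime Z (X * Y) := hZX.mul_right hZY
    -- cast to integers
    set x : ℤ := (X : ℤ) with hx
    set y : ℤ := (Y : ℤ) with hy
    set z : ℤ := (Z : ℤ) with hz
    have H1 : x ^ 4 + y ^ 4 = 2 * z ^ 2 := by rw [hx, hy, hz]; exact_mod_cast h
    -- x and y have the same parity, so x^4 - y^4 is even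
    have hpar : Even (x ^ 4 - y ^ 4) := by
      have h1 : Even (x ^ 4 + y ^ 4) := ⟨z ^ 2, by linarith⟩
      rcases Int.even_or_odd x with hx1 | hx1
      · rcases Int.even_or_odd y with hy1 | hy1
        · exact (Int.even_pow.mpr ⟨hx1, by norm_num⟩).sub (Int.even_pow.mpr ⟨hy1, by norm_num⟩)
        · exfalso
          have : Odd (x ^ 4 + y ^ 4) :=
            Even.add_odd (Int.even_pow.mpr ⟨hx1, by norm_num⟩) (hy1.pow)
          exact (Int.not_odd_iff_even.mpr h1) this
      · rcases Int.even_or_odd y with hy1 | hy1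
        · exfalso
          have : Odd (x ^ 4 + y ^ 4) :=
            Odd.add_even (hx1.pow) (Int.even_pow.mpr ⟨hy1, by norm_num⟩)
          exact (Int.not_odd_iff_even.mpr h1) this
        · exact (hx1.pow).sub_odd (hy1.pow)
    obtain ⟨c, hc⟩ := hpar
    have H2 : x ^ 4 - y ^ 4 = 2 * c := by rw [hc]; ring
    -- z^4 = (x*y)^4 + c^2
    have H3 : z ^ 4 = (x * y) ^ 4 + c ^ 2 := by
      have h4 : (4 : ℤ) * z ^ 4 = 4 * ((x * y) ^ 4 + c ^ 2) := by
        linear_combination (-(x ^ 4 + y ^ 4 + 2 * z ^ 2)) * H1 + (x ^ 4 - y ^ 4 + 2 * c) * H2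
      exact mul_left_cancel₀ (by norm_num) h4
    have hgcd' : Int.gcd z (x * y) = 1 := by
      have : x * y = ((X * Y : ℕ) : ℤ) := by push_cast; ring
      rw [this, hz, Int.gcd_natCast_natCast]
      exact hZXY
    have hxy0 : x * y ≠ 0 := by
      apply mul_ne_zero <;> simp [hx, hy] <;> omega
    have hc0 : c ≠ 0 := by
      intro h0
      rw [h0, mul_zero] at H2
      have : X ^ 4 = Y ^ 4 := by
        have h5 := sub_eq_zero.mp H2
        rw [hx, hy] at h5
        exact_mod_cast h5
      exact hne (Nat.pow_left_injective (by norm_num) this)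
    exact no44 z.natAbs z (x * y) c rfl hgcd' hxy0 hc0 H3
  -- now X = Y, so X^4 = Z^2, hence Z = X^2
  subst hXY
  have h1 : (X ^ 2) ^ 2 = Z ^ 2 := by ring_nf; ring_nf at h; omega
  have h2 : X ^ 2 = Z := Nat.pow_left_injective (by norm_num) h1
  have h3 : Nat.gcd X Z = X := by
    rw [← h2]
    exact Nat.gcd_eq_left (dvd_pow_self X (by norm_num))
  have hX1 : X = 1 := by rw [h3] at hgcd; exact hgcd
  refine ⟨hX1, hX1, ?_⟩
  rw [← h2, hX1]
  norm_num
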